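/- If −1 < λ < 0 and β > 1, then every fixed point of f is unstable, and there exists N ∈ ℕ such that for every integer k ≥ N the map f has a periodic orbit of minimal period k. -/

import Mathlib

open Filter Topology

/-- The clipping function Φ. -/
noncomputable def Phi (t : ℝ) : ℝ := if t < -1 then -1 else if t ≤ 1 then t else 1

/-- The map f(x,s) = (λx + a·s, Φ(s + x' − x)). -/
noncomputable def f (lam a : ℝ) (p : ℝ × ℝ) : ℝ × ℝ :=
  (lam * p.1 + a * p.2, Phi (p.2 + (lam * p.1 + a * p.2) - p.1))

/-- Membership in the strip L = {(x,s) : |s| ≤ 1}. -/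
def inL (p : ℝ × ℝ) : Prop := |p.2| ≤ 1

/-- A trajectory of the map f, staying in the strip L. -/
def IsTraj (lam a : ℝ) (z : ℕ → ℝ × ℝ) : Prop :=
  (∀ n, inL (z n)) ∧ ∀ n, z (n + 1) = f lam a (z n)

/-- The set of fixed points of f in the strip L. -/
def fixedSet (lam a : ℝ) : Set (ℝ × ℝ) := {p | inL p ∧ f lam a p = p}

/-- Lyapunov stability of a fixed point. -/
def IsStableFixed (lam a : ℝ) (P : ℝ × ℝ) : Prop :=
  ∀ ε > 0, ∃ δ > 0, ∀ z : ℕ → ℝ × ℝ, IsTraj lam a z → dist (z 0) P < δ →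
    ∀ n, dist (z n) P < ε

/-- Semi-stability of a fixed point. -/
def IsSemiStable (lam a : ℝ) (P : ℝ × ℝ) : Prop :=
  ∃ U₁ U₂ : Set (ℝ × ℝ), IsOpen U₁ ∧ IsOpen U₂ ∧
    U₁ ⊆ {p | |p.2| < 1} ∧ U₂ ⊆ {p | |p.2| < 1} ∧
    P ∈ frontier U₁ ∧ P ∈ frontier U₂ ∧
    (∀ ε > 0, ∃ δ > 0, ∀ z : ℕ → ℝ × ℝ, IsTraj lam a z → z 0 ∈ U₁ →
      dist (z 0) P < δ → ∀ n, dist (z n) P < ε) ∧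
    (∃ ε₀ > 0, ∀ z : ℕ → ℝ × ℝ, IsTraj lam a z → z 0 ∈ U₂ →
      ∃ n, ε₀ ≤ dist (z n) P)

/-- Stability of a set (e.g. a periodic orbit) for the dynamics of f. -/
def IsStableSet (lam a : ℝ) (O : Set (ℝ × ℝ)) : Prop :=
  ∀ ε > 0, ∃ δ > 0, ∀ z : ℕ → ℝ × ℝ, IsTraj lam a z →
    Metric.infDist (z 0) O < δ → ∀ n, Metric.infDist (z n) O < ε

/-- O is a periodic orbit of f. -/
def IsPeriodicOrbit (lam a : ℝ) (O : Set (ℝ × ℝ)) : Prop :=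
  ∃ P : ℝ × ℝ, ∃ m : ℕ, 1 ≤ m ∧ inL P ∧ (f lam a)^[m] P = P ∧
    O = {q | ∃ i < m, (f lam a)^[i] P = q}

/-- P is a periodic point of minimal period k. -/
def HasMinPeriod (lam a : ℝ) (P : ℝ × ℝ) (k : ℕ) : Prop :=
  (f lam a)^[k] P = P ∧ ∀ j, 1 ≤ j → j < k → (f lam a)^[j] P ≠ P

private lemma phi_id {t : ℝ} (ht1 : -1 ≤ t) (ht2 : t ≤ 1) : Phi t = t := by
  unfold Phi; split_ifs <;> linarith

private lemma phi_lo {t : ℝ} (h : t ≤ -1) : Phi t = -1 := by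
  unfold Phi; split_ifs <;> linarith

private lemma phi_hi {t : ℝ} (h : 1 ≤ t) : Phi t = 1 := by
  unfold Phi; split_ifs <;> linarith

private lemma phi_mem (t : ℝ) : -1 ≤ Phi t ∧ Phi t ≤ 1 := by
  unfold Phi; split_ifs <;> constructor <;> linarith

private lemma iter_inL (lam a : ℝ) (p : ℝ × ℝ) (hp : inL p) (n : ℕ) :
    inL ((f lam a)^[n] p) := by
  cases n with
  | zero => exact hp
  | succ k =>
    rw [Function.iterate_succ_apply']
    exact abs_le.2 ⟨(phi_mem _).1, (phi_mem _).2⟩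

private lemma unstable (lam a : ℝ) (h2 : lam < 0) (h3 : 1 < lam + a) :
    ∀ P ∈ fixedSet lam a, ¬ IsStableFixed lam a P := by
  rintro ⟨xs, ss⟩ ⟨hL, hfix⟩ hstab
  set b := lam + a with hbdef
  have hb0 : (0:ℝ) < b := by linarith
  have hfx : lam * xs + a * ss = xs := congrArg Prod.fst hfix
  have hss : |ss| ≤ 1 := hL
  obtain ⟨δ, hδ, hST⟩ := hstab (1/b) (by positivity)
  set d : ℝ := min δ 1 / 2 with hddef
  have hd0 : 0 < d := by
    have : (0:ℝ) < min δ 1 := lt_min hδ one_pos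
    positivity
  have hdδ : d < δ := by
    have h1 : min δ 1 ≤ δ := min_le_left _ _
    have : 0 < min δ 1 := lt_min hδ one_pos
    simp only [hddef]; linarith
  have hd1 : d ≤ 1 := by
    have h1 : min δ 1 ≤ 1 := min_le_right _ _
    simp only [hddef]; linarith
  set t0 : ℝ := if 0 ≤ ss then -d else d with ht0def
  have ht0abs : |t0| = d := by
    simp only [ht0def]; split_ifs <;> simp [abs_of_pos hd0, abs_of_neg (by linarith : -d < 0)]
  set z : ℕ → ℝ × ℝ := fun n => (f lam a)^[n] (xs + t0, ss + t0) with hzdef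
  have hz0L : inL (xs + t0, ss + t0) := by
    simp only [inL, abs_le] at hss ⊢
    simp only [ht0def]; split_ifs with h <;> constructor <;> linarith
  have htraj : IsTraj lam a z := by
    constructor
    · intro n; exact iter_inL lam a _ hz0L n
    · intro n; simp only [hzdef, Function.iterate_succ_apply']
  -- formula for the trajectory while small
  have hform : ∀ j : ℕ, b ^ j * d ≤ 1 → z j = (xs + b ^ j * t0, ss + b ^ j * t0) := by
    intro j
    induction j with
    | zero => intro _; simp [hzdef]
    | succ i ih =>
      intro hle
      have hbi : b ^ i ≤ b ^ (i+1) := pow_le_pow_right₀ (by linarith) (by omega)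
      have hble : b ^ i * d ≤ 1 := le_trans (by nlinarith) hle
      have hzi := ih hble
      have hstep : z (i+1) = f lam a (z i) := by
        simp only [hzdef, Function.iterate_succ_apply']
      rw [hstep, hzi]
      have habs : |b ^ (i+1) * t0| ≤ 1 := by
        rw [abs_mul, ht0abs, abs_of_pos (by positivity : (0:ℝ) < b ^ (i+1))]; exact hle
      have hX : lam * (xs + b ^ i * t0) + a * (ss + b ^ i * t0)
          = xs + b ^ (i+1) * t0 := by
        have : (lam + a) * (b ^ i * t0) = b ^ (i+1) * t0 := by
          rw [← hbdef]; ring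
        nlinarith [hfx, this]
      simp only [f, hX]
      have harg : ss + b ^ i * t0 + (xs + b ^ (i+1) * t0) - (xs + b ^ i * t0)
          = ss + b ^ (i+1) * t0 := by ring
      rw [harg]
      have hPhi : Phi (ss + b ^ (i+1) * t0) = ss + b ^ (i+1) * t0 := by
        have h1 : -1 ≤ b^(i+1)*t0 := by cases abs_le.1 habs; linarith
        have h2 : b^(i+1)*t0 ≤ 1 := (abs_le.1 habs).2
        have hbs : 0 < b ^ (i+1) := by positivity
        rcases le_or_gt 0 ss with h | h
        · have ht0neg : t0 = -d := by simp [ht0def, h]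
          have : b ^ (i+1) * t0 ≤ 0 := by rw [ht0neg]; nlinarith
          apply phi_id <;> cases abs_le.1 hss <;> linarith
        · have ht0pos : t0 = d := by simp [ht0def, not_le.2 h]
          have : 0 ≤ b ^ (i+1) * t0 := by rw [ht0pos]; positivity
          apply phi_id <;> cases abs_le.1 hss <;> linarith
      rw [hPhi]
  -- find escape time
  have hex : ∃ N : ℕ, 1 < b ^ N * d := by
    obtain ⟨N, hN⟩ := pow_unbounded_of_one_lt (1/d) h3
    refine ⟨N, ?_⟩
    rw [div_lt_iff₀ hd0] at hN
    nlinarith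
  classical
  have hN1 : Nat.find hex ≠ 0 := by
    intro h
    have := Nat.find_spec hex
    rw [h] at this; simp at this; linarith
  set N' := Nat.find hex - 1 with hN'def
  have hfind : Nat.find hex = N' + 1 := by omega
  have hNspec : 1 < b ^ (N' + 1) * d := by rw [← hfind]; exact Nat.find_spec hex
  have hNmin : ¬ (1 < b ^ N' * d) := Nat.find_min hex (by omega)
  push_neg at hNmin
  have hzN := hform N' hNmin
  have hca : |b ^ N' * t0| = b ^ N' * d := by
    rw [abs_mul, ht0abs, abs_of_pos (by positivity : (0:ℝ) < b ^ N')]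
  have hdist0 : dist (z 0) (xs, ss) < δ := by
    have : z 0 = (xs + t0, ss + t0) := by simp [hzdef]
    rw [this, Prod.dist_eq]
    simp only [Real.dist_eq]
    have : |xs + t0 - xs| = d := by rw [show xs + t0 - xs = t0 by ring, ht0abs]
    rw [this]
    have : |ss + t0 - ss| = d := by rw [show ss + t0 - ss = t0 by ring, ht0abs]
    rw [this]
    simpa using hdδ
  have hfar := hST z htraj hdist0 N'
  rw [hzN, Prod.dist_eq] at hfar
  simp only [Real.dist_eq] at hfar
  have he1 : |xs + b ^ N' * t0 - xs| = b ^ N' * d := by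
    rw [show xs + b ^ N' * t0 - xs = b ^ N' * t0 by ring, hca]
  have he2 : |ss + b ^ N' * t0 - ss| = b ^ N' * d := by
    rw [show ss + b ^ N' * t0 - ss = b ^ N' * t0 by ring, hca]
  rw [he1, he2, max_self] at hfar
  -- b ^ N' * d < 1/b but b^(N'+1) * d > 1
  have : b ^ (N'+1) * d = b * (b ^ N' * d) := by ring
  rw [this] at hNspec
  rw [lt_div_iff₀ hb0] at hfar
  nlinarith

private lemma f_eval (lam a x s X : ℝ) (hX : lam * x + a * s = X) :
    f lam a (x, s) = (X, Phi (s + X - x)) := by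
  simp only [f]; rw [hX]

/-- the affine segment s_j = p - b^j (p - q), with value q at j = 0 -/
private noncomputable def seg (b p q : ℝ) (j : ℕ) : ℝ := p - b ^ j * (p - q)

/-- the candidate periodic orbit -/
private noncomputable def orbW (b xA xB s1 s2 : ℝ) (m : ℕ) (j : ℕ) : ℝ × ℝ :=
  if j < m then (xA + seg b s1 1 j - 1, seg b s1 1 j)
  else (xB + seg b s2 (-1) (j - m) + 1, seg b s2 (-1) (j - m))

private lemma algebra_main (lamb B g u v D xA xB s1 s2 p q : ℝ)
    (hg : g * (1 - B) = 1 - lamb)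
    (hu : u = B * p - 1) (hv : v = B * q - 1)
    (hD : D = u + v + g * u * v)
    (hxA : xA = (g - 1) * (u - v + g * u * v) / (g * D))
    (hxB : xB = (1 - g) * (v - u + g * u * v) / (g * D))
    (hs1 : s1 = g * (1 - xA)) (hs2 : s2 = g * (-1 - xB))
    (hgne : g ≠ 0) (hDne : D ≠ 0) :
    D * (s1 - 1) = 2 * v * (g - 1) ∧
    D * (s2 + 1) = 2 * u * (1 - g) ∧
    D * (xA - xB - 2) = -2 * (u * v + u + v) ∧
    s1 - B * p * (s1 - 1) = xB - xA + 1 ∧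
    s2 - B * q * (s2 + 1) = xA - xB - 1 ∧
    D * ((s1 - p * (s1 - 1)) + 1) = 2 * (lamb * v * p + u) ∧
    D * ((s2 - q * (s2 + 1)) - 1) = -2 * (lamb * u * q + v) := by
  have hlam : lamb = 1 - g * (1 - B) := by linarith
  subst hlam hs1 hs2 hxA hxB hu hv
  refine ⟨?_, ?_, ?_, ?_, ?_, ?_, ?_⟩ <;> (field_simp; subst hD; ring)

private lemma orbit_steps (lam a xA xB s1 s2 : ℝ) (m n : ℕ)
    (hm : 1 ≤ m) (hn : 1 ≤ n)
    (hb : 1 < lam + a)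
    (hk1 : (1 - lam) * (1 - xA) = (1 - (lam + a)) * s1)
    (hk2 : (1 - lam) * (-1 - xB) = (1 - (lam + a)) * s2)
    (hidA : seg (lam + a) s1 1 m = xB - xA + 1)
    (hidB : seg (lam + a) s2 (-1) n = xA - xB - 1)
    (hAB : 2 < xA - xB)
    (hs1 : 1 < s1) (hs2 : s2 < -1)
    (hsm : -1 ≤ seg (lam + a) s1 1 (m - 1))
    (htn : seg (lam + a) s2 (-1) (n - 1) ≤ 1) :
    inL (orbW (lam + a) xA xB s1 s2 m 0) ∧
      HasMinPeriod lam a (orbW (lam + a) xA xB s1 s2 m 0) (m + n) := by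
  have hb0 : (0:ℝ) < lam + a := by linarith
  have hσ0 : seg (lam + a) s1 1 0 = 1 := by simp [seg]
  have hτ0 : seg (lam + a) s2 (-1) 0 = -1 := by simp [seg]
  -- monotonicity
  have hσmono : ∀ i j : ℕ, i ≤ j → seg (lam + a) s1 1 j ≤ seg (lam + a) s1 1 i := by
    intro i j hij
    simp only [seg]
    have h := pow_le_pow_right₀ hb.le hij
    linarith [mul_le_mul_of_nonneg_right h (by linarith : (0:ℝ) ≤ s1 - 1)]
  have hτmono : ∀ i j : ℕ, i ≤ j → seg (lam + a) s2 (-1) i ≤ seg (lam + a) s2 (-1) j := by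
    intro i j hij
    simp only [seg]
    have h := pow_le_pow_right₀ hb.le hij
    linarith [mul_le_mul_of_nonpos_right h (by linarith : s2 + 1 ≤ 0)]
  have hσub : ∀ j, seg (lam + a) s1 1 j ≤ 1 :=
    fun j => le_trans (hσmono 0 j (by omega)) (le_of_eq hσ0)
  have hσlb : ∀ j, j ≤ m - 1 → -1 ≤ seg (lam + a) s1 1 j :=
    fun j hj => le_trans hsm (hσmono j (m-1) hj)
  have hτlb : ∀ j, -1 ≤ seg (lam + a) s2 (-1) j :=
    fun j => le_trans (le_of_eq hτ0.symm) (hτmono 0 j (by omega))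
  have hτub : ∀ j, j ≤ n - 1 → seg (lam + a) s2 (-1) j ≤ 1 :=
    fun j hj => le_trans (hτmono j (n-1) hj) htn
  -- one-step x-coordinate algebra
  have hstepA : ∀ j : ℕ, lam * (xA + seg (lam+a) s1 1 j - 1) + a * seg (lam+a) s1 1 j
      = xA + seg (lam+a) s1 1 (j+1) - 1 := by
    intro j; simp only [seg]; ring_nf; linear_combination hk1
  have hstepB : ∀ j : ℕ, lam * (xB + seg (lam+a) s2 (-1) j + 1) + a * seg (lam+a) s2 (-1) j
      = xB + seg (lam+a) s2 (-1) (j+1) + 1 := by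
    intro j; simp only [seg]; ring_nf; linear_combination hk2
  -- branch descriptions
  have hWA : ∀ j, j < m → orbW (lam+a) xA xB s1 s2 m j
      = (xA + seg (lam+a) s1 1 j - 1, seg (lam+a) s1 1 j) := by
    intro j hj; simp [orbW, hj]
  have hWB : ∀ j, ¬ (j < m) → orbW (lam+a) xA xB s1 s2 m j
      = (xB + seg (lam+a) s2 (-1) (j-m) + 1, seg (lam+a) s2 (-1) (j-m)) := by
    intro j hj; simp [orbW, hj]
  -- the step lemma
  have hstep : ∀ j, j + 1 < m + n →
      f lam a (orbW (lam+a) xA xB s1 s2 m j) = orbW (lam+a) xA xB s1 s2 m (j+1) := by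
    intro j hj
    by_cases hjm : j + 1 < m
    · -- A unclipped
      rw [hWA j (by omega), hWA (j+1) hjm, f_eval _ _ _ _ _ (hstepA j)]
      have harg : seg (lam+a) s1 1 j + (xA + seg (lam+a) s1 1 (j+1) - 1)
          - (xA + seg (lam+a) s1 1 j - 1) = seg (lam+a) s1 1 (j+1) := by ring
      rw [harg, phi_id (hσlb (j+1) (by omega)) (hσub (j+1))]
    · by_cases hjm2 : j < m
      · -- clip down: j+1 = m
        have hjm1 : j + 1 = m := by omega
        rw [hWA j hjm2, hWB (j+1) (by omega), f_eval _ _ _ _ _ (hstepA j)]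
        have hii : j + 1 - m = 0 := by omega
        rw [hii, hτ0]
        have harg : seg (lam+a) s1 1 j + (xA + seg (lam+a) s1 1 (j+1) - 1)
            - (xA + seg (lam+a) s1 1 j - 1) = seg (lam+a) s1 1 (j+1) := by ring
        rw [harg]
        rw [hjm1, hidA]
        rw [phi_lo (by linarith)]
        simp only [Prod.mk.injEq]
        exact ⟨by ring, trivial⟩
      · -- B unclipped
        have hi : j + 1 - m = (j - m) + 1 := by omega
        rw [hWB j hjm2, hWB (j+1) (by omega), f_eval _ _ _ _ _ (hstepB (j-m)), hi]
        have harg : seg (lam+a) s2 (-1) (j-m) + (xB + seg (lam+a) s2 (-1) (j-m+1) + 1)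
            - (xB + seg (lam+a) s2 (-1) (j-m) + 1) = seg (lam+a) s2 (-1) (j-m+1) := by ring
        rw [harg, phi_id (hτlb (j-m+1)) (hτub (j-m+1) (by omega))]
  -- last step wraps around
  have hlast : f lam a (orbW (lam+a) xA xB s1 s2 m (m+n-1)) = orbW (lam+a) xA xB s1 s2 m 0 := by
    rw [hWB (m+n-1) (by omega), hWA 0 (by omega), f_eval _ _ _ _ _ (hstepB (m+n-1-m)), hσ0]
    have hi : m + n - 1 - m + 1 = n := by omega
    rw [hi]
    have harg : seg (lam+a) s2 (-1) (m+n-1-m) + (xB + seg (lam+a) s2 (-1) n + 1)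
        - (xB + seg (lam+a) s2 (-1) (m+n-1-m) + 1) = seg (lam+a) s2 (-1) n := by ring
    rw [harg, hidB, phi_hi (by linarith)]
    simp only [Prod.mk.injEq]
    exact ⟨by ring, trivial⟩
  -- iteration
  have hiter : ∀ j, j < m + n →
      (f lam a)^[j] (orbW (lam+a) xA xB s1 s2 m 0) = orbW (lam+a) xA xB s1 s2 m j := by
    intro j
    induction j with
    | zero => intro _; simp
    | succ i ih =>
      intro h
      rw [Function.iterate_succ_apply', ih (by omega), hstep i h]
  constructor
  · rw [hWA 0 (by omega), hσ0]; simp [inL]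
  constructor
  · have h1 : m + n = (m + n - 1) + 1 := by omega
    rw [h1, Function.iterate_succ_apply', hiter (m+n-1) (by omega), hlast]
  · intro j hj1 hj2
    rw [hiter j hj2]
    rw [hWA 0 (by omega), hσ0]
    by_cases hjm : j < m
    · -- second coordinate < 1
      rw [hWA j hjm]
      intro hcontra
      have h2 := congrArg Prod.snd hcontra
      simp only at h2
      have hσ1 : seg (lam+a) s1 1 1 < 1 := by
        simp only [seg, pow_one]
        linarith [mul_pos (by linarith : (0:ℝ) < (lam+a) - 1) (by linarith : (0:ℝ) < s1 - 1)]
      have := hσmono 1 j hj1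
      linarith
    · -- first coordinate < xA
      rw [hWB j hjm]
      intro hcontra
      have h2 := congrArg Prod.fst hcontra
      simp only at h2
      have := hτub (j - m) (by omega)
      linarith

private lemma orbit_exists (lam a : ℝ) (h2 : lam < 0) (h3 : 1 < lam + a)
    (m n : ℕ) (hm : 1 ≤ m) (hmn : m ≤ n) (hnm : n ≤ m + 1)
    (hb1 : 2 * ((lam + a) - 1) < (1 - lam) * ((lam + a) ^ m - 1))
    (hb2 : (lam + a) ^ 2 < (-lam) * ((lam + a) ^ m - 1)) :
    ∃ P : ℝ × ℝ, inL P ∧ HasMinPeriod lam a P (m + n) := by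
  obtain ⟨m', rfl⟩ : ∃ m', m = m' + 1 := ⟨m - 1, by omega⟩
  obtain ⟨n', rfl⟩ : ∃ n', n = n' + 1 := ⟨n - 1, by omega⟩
  have hb0 : (0:ℝ) < lam + a := lt_trans one_pos h3
  have h1l : (0:ℝ) < 1 - lam := by linarith
  have h1b : 1 - (lam + a) < 0 := by linarith
  obtain ⟨g, hgdef⟩ : ∃ x:ℝ, x = (1 - lam) / (1 - (lam + a)) := ⟨_, rfl⟩
  have hgneg : g < 0 := by rw [hgdef]; exact div_neg_of_pos_of_neg h1l h1b
  have hgne : g ≠ 0 := ne_of_lt hgneg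
  have hgb : g * (1 - (lam + a)) = 1 - lam := by rw [hgdef]; exact div_mul_cancel₀ _ (by linarith)
  obtain ⟨p, hpdef⟩ : ∃ x:ℝ, x = (lam + a) ^ m' := ⟨_, rfl⟩
  obtain ⟨q, hqdef⟩ : ∃ x:ℝ, x = (lam + a) ^ n' := ⟨_, rfl⟩
  have hp0 : 0 < p := by rw [hpdef]; positivity
  have hq0 : 0 < q := by rw [hqdef]; positivity
  obtain ⟨u, hudef⟩ : ∃ x:ℝ, x = (lam + a) * p - 1 := ⟨_, rfl⟩
  obtain ⟨v, hvdef⟩ : ∃ x:ℝ, x = (lam + a) * q - 1 := ⟨_, rfl⟩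
  have hum : (lam + a) ^ (m' + 1) = (lam + a) * p := by rw [hpdef, pow_succ]; ring
  have hvn : (lam + a) ^ (n' + 1) = (lam + a) * q := by rw [hqdef, pow_succ]; ring
  have hb1' : 2 * ((lam + a) - 1) < (1 - lam) * u := by
    rw [hudef, ← hum]; exact hb1
  have hb2' : (lam + a) ^ 2 < (-lam) * u := by
    rw [hudef, ← hum]; exact hb2
  have hu0 : 0 < u := by
    by_contra h
    push_neg at h
    linarith [mul_nonneg h1l.le (neg_nonneg.2 h), hb1']
  have hpq : p ≤ q := by
    rw [hpdef, hqdef]; exact pow_le_pow_right₀ h3.le (by omega)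
  have huv : u ≤ v := by
    rw [hudef, hvdef]
    linarith [mul_le_mul_of_nonneg_left hpq hb0.le]
  have hv0 : 0 < v := lt_of_lt_of_le hu0 huv
  obtain ⟨D, hDdef⟩ : ∃ x:ℝ, x = u + v + g * u * v := ⟨_, rfl⟩
  have hexp : (1 - (lam + a)) * D = (1 - (lam + a)) * (u + v) + (1 - lam) * (u * v) := by
    rw [hDdef]; linear_combination (u * v) * hgb
  have h6 : 0 < (1 - (lam + a)) * D := by
    rw [hexp]
    linarith [mul_lt_mul_of_pos_right hb1' hv0,
      mul_nonneg (by linarith : (0:ℝ) ≤ (lam + a) - 1) (by linarith : (0:ℝ) ≤ v - u)]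
  have hDneg : D < 0 := by
    by_contra h
    push_neg at h
    linarith [mul_nonneg (by linarith : (0:ℝ) ≤ -(1 - (lam + a))) h, h6]
  have hDne : D ≠ 0 := ne_of_lt hDneg
  obtain ⟨xA, hxAdef⟩ : ∃ x:ℝ, x = (g - 1) * (u - v + g * u * v) / (g * D) := ⟨_, rfl⟩
  obtain ⟨xB, hxBdef⟩ : ∃ x:ℝ, x = (1 - g) * (v - u + g * u * v) / (g * D) := ⟨_, rfl⟩
  obtain ⟨s1, hs1def⟩ : ∃ x:ℝ, x = g * (1 - xA) := ⟨_, rfl⟩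
  obtain ⟨s2, hs2def⟩ : ∃ x:ℝ, x = g * (-1 - xB) := ⟨_, rfl⟩
  obtain ⟨id1, id2, id3, id4, id5, id6, id7⟩ :=
    algebra_main lam (lam + a) g u v D xA xB s1 s2 p q hgb hudef hvdef hDdef
      hxAdef hxBdef hs1def hs2def hgne hDne
  have hs1gt : 1 < s1 := by
    by_contra h
    push_neg at h
    have h0 : 0 ≤ D * (s1 - 1) := by
      linarith only [mul_nonneg (le_of_lt (neg_pos.2 hDneg))
        (by linarith only [h] : (0:ℝ) ≤ 1 - s1)]
    have h1 : 2 * v * (g - 1) < 0 :=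
      mul_neg_of_pos_of_neg (by linarith only [hv0]) (by linarith only [hgneg])
    linarith only [h0, h1, id1]
  have hs2lt : s2 < -1 := by
    by_contra h
    push_neg at h
    have h0 : D * (s2 + 1) ≤ 0 :=
      mul_nonpos_of_nonpos_of_nonneg hDneg.le (by linarith only [h])
    have h1 : 0 < 2 * u * (1 - g) :=
      mul_pos (by linarith only [hu0]) (by linarith only [hgneg])
    linarith only [h0, h1, id2]
  have hABgt : 2 < xA - xB := by
    by_contra h
    push_neg at h
    have h0 : 0 ≤ D * (xA - xB - 2) := by
      linarith only [mul_nonneg (le_of_lt (neg_pos.2 hDneg))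
        (by linarith only [h] : (0:ℝ) ≤ 2 - (xA - xB))]
    have h1 : 0 < u * v := mul_pos hu0 hv0
    linarith only [h0, h1, id3, hu0, hv0]
  have hk1 : (1 - lam) * (1 - xA) = (1 - (lam + a)) * s1 := by
    rw [hs1def]; linear_combination (xA - 1) * hgb
  have hk2 : (1 - lam) * (-1 - xB) = (1 - (lam + a)) * s2 := by
    rw [hs2def]; linear_combination (xB + 1) * hgb
  have hidA : seg (lam + a) s1 1 (m' + 1) = xB - xA + 1 := by
    simp only [seg, hum]
    linear_combination id4
  have hidB : seg (lam + a) s2 (-1) (n' + 1) = xA - xB - 1 := by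
    simp only [seg, hvn]
    linear_combination id5
  -- the auxiliary growth bounds
  have h7 : (lam + a) ^ 2 * p < (-lam) * u * p := by
    linarith only [mul_lt_mul_of_pos_right hb2' hp0]
  have h8 : u + 1 ≤ (lam + a) ^ 2 * p := by
    have h8' : (lam + a) * p ≤ (lam + a) ^ 2 * p := by
      have h8'' := mul_nonneg (mul_nonneg hb0.le
        (by linarith only [h3] : (0:ℝ) ≤ (lam + a) - 1)) hp0.le
      linarith only [h8'']
    linarith only [hudef.le, h8']
  have h9 : (-lam) * u * p ≤ (-lam) * v * p := by
    linarith only [mul_le_mul_of_nonneg_right (mul_le_mul_of_nonneg_left huv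
      (by linarith only [h2] : (0:ℝ) ≤ -lam)) hp0.le]
  have hkey1 : lam * v * p + u ≤ 0 := by linarith only [h7, h8, h9]
  have h10 : (lam + a) ^ (n' + 1) ≤ (lam + a) ^ (m' + 2) := pow_le_pow_right₀ h3.le (by omega)
  have h11 : (lam + a) ^ (m' + 2) = (lam + a) ^ 2 * p := by rw [hpdef]; ring
  have h12 : (-lam) * u * p ≤ (-lam) * u * q := by
    linarith only [mul_le_mul_of_nonneg_left hpq (mul_nonneg
      (by linarith only [h2] : (0:ℝ) ≤ -lam) hu0.le)]
  have hkey2 : lam * u * q + v ≤ 0 := by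
    have hv1 : v + 1 = (lam + a) ^ (n' + 1) := by rw [hvn, hvdef]; ring
    linarith only [hv1, h10, h11, h12, h7]
  have hsm : -1 ≤ seg (lam + a) s1 1 ((m' + 1) - 1) := by
    have hseg : seg (lam + a) s1 1 ((m' + 1) - 1) = s1 - p * (s1 - 1) := by
      simp only [seg, Nat.add_sub_cancel, ← hpdef]
    rw [hseg]
    by_contra h
    push_neg at h
    have h0 : 0 < D * ((s1 - p * (s1 - 1)) + 1) :=
      mul_pos_of_neg_of_neg hDneg (by linarith only [h])
    linarith only [id6, hkey1, h0]
  have htn : seg (lam + a) s2 (-1) ((n' + 1) - 1) ≤ 1 := by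
    have hseg : seg (lam + a) s2 (-1) ((n' + 1) - 1) = s2 - q * (s2 + 1) := by
      simp only [seg, Nat.add_sub_cancel, ← hqdef]; ring
    rw [hseg]
    by_contra h
    push_neg at h
    have h0 : D * ((s2 - q * (s2 + 1)) - 1) < 0 :=
      mul_neg_of_neg_of_pos hDneg (by linarith only [h])
    linarith only [id7, hkey2, h0]
  obtain ⟨hin, hmin⟩ := orbit_steps lam a xA xB s1 s2 (m' + 1) (n' + 1)
    (by omega) (by omega) h3 hk1 hk2 hidA hidB hABgt hs1gt hs2lt hsm htn
  exact ⟨_, hin, hmin⟩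

/-- Case (e): −1 < λ < 0, β > 1. All fixed points are unstable and f has periodic
orbits of all sufficiently large minimal periods. -/
theorem stmt7 (lam a : ℝ) (h1 : -1 < lam) (h2 : lam < 0) (h3 : 1 < lam + a) :
    (∀ P ∈ fixedSet lam a, ¬ IsStableFixed lam a P) ∧
    ∃ N : ℕ, ∀ k : ℕ, N ≤ k → ∃ P : ℝ × ℝ, inL P ∧ HasMinPeriod lam a P k := by
  constructor
  · exact unstable lam a h2 h3
  · obtain ⟨M, hM⟩ := pow_unbounded_of_one_lt
      (max (2 * ((lam + a) - 1) / (1 - lam)) ((lam + a) ^ 2 / (-lam)) + 2) h3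
    refine ⟨2 * M + 2, ?_⟩
    intro k hk
    have hm1 : M ≤ k / 2 := by omega
    have hmn : k / 2 ≤ k - k / 2 := by omega
    have hnm : k - k / 2 ≤ k / 2 + 1 := by omega
    have hmk : k / 2 + (k - k / 2) = k := by omega
    have h1l : (0:ℝ) < 1 - lam := by linarith
    have hml : (0:ℝ) < -lam := by linarith
    have hpow : max (2 * ((lam + a) - 1) / (1 - lam)) ((lam + a) ^ 2 / (-lam)) + 2
        ≤ (lam + a) ^ (k / 2) :=
      le_trans hM.le (pow_le_pow_right₀ h3.le hm1)
    have hb1 : 2 * ((lam + a) - 1) < (1 - lam) * ((lam + a) ^ (k / 2) - 1) := by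
      have hx : 2 * ((lam + a) - 1) / (1 - lam) < (lam + a) ^ (k / 2) - 1 := by
        have := le_max_left (2 * ((lam + a) - 1) / (1 - lam)) ((lam + a) ^ 2 / (-lam))
        linarith
      have := (div_lt_iff₀ h1l).1 hx
      linarith
    have hb2 : (lam + a) ^ 2 < (-lam) * ((lam + a) ^ (k / 2) - 1) := by
      have hx : (lam + a) ^ 2 / (-lam) < (lam + a) ^ (k / 2) - 1 := by
        have := le_max_right (2 * ((lam + a) - 1) / (1 - lam)) ((lam + a) ^ 2 / (-lam))
        linarith
      have := (div_lt_iff₀ hml).1 hx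
      linarith
    obtain ⟨P, hP, hmp⟩ := orbit_exists lam a h2 h3 (k / 2) (k - k / 2)
      (by omega) hmn hnm hb1 hb2
    rw [hmk] at hmp
    exact ⟨P, hP, hmp⟩
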